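/- Let 𝔫 be an H-type algebra with ordered decomposition (𝔷,𝔳). If 𝔫 is non-abelian, then the ordered decomposition is unique: 𝔷 equals the center Z(𝔫) and 𝔳 equals its orthogonal complement. If 𝔫 is abelian and nonzero, there are exactly two ordered decompositions, namely (𝔫, {0}) and ({0}, 𝔫). -/

import Mathlib

open RealInnerProductSpace

/-- The "center" of a bilinear bracket: elements bracketing to zero with everything. -/
def bracketCenter {n : Type*} [NormedAddCommGroup n] [InnerProductSpace ℝ n]
    (br : n →ₗ[ℝ] n →ₗ[ℝ] n) : Submodule ℝ n where
  carrier := {x | ∀ y, br x y = 0}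
  add_mem' := by
    intro a b ha hb
    intro y
    simp [map_add, LinearMap.add_apply, ha y, hb y]
  zero_mem' := by intro y; simp
  smul_mem' := by
    intro c a ha
    intro y
    simp [map_smul, LinearMap.smul_apply, ha y]

/-- `(z, v)` is an ordered decomposition making the Euclidean Lie algebra `n` (with
Lie bracket `br`) an H-type algebra: `n = z ⊕ v` orthogonally, `[n,z] = 0`,
`[n,n] ⊆ z`, and the Riesz-defined map `J : z → End(v)`,
`⟪J(Z)X, Y⟫ = ⟪Z, [X,Y]⟫`, satisfies `‖J(Z)X‖ = ‖Z‖·‖X‖`. -/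
def IsHTypeDecomp {n : Type*} [NormedAddCommGroup n] [InnerProductSpace ℝ n]
    (br : n →ₗ[ℝ] n →ₗ[ℝ] n) (z v : Submodule ℝ n) : Prop :=
  v = zᗮ ∧
  (∀ x : n, ∀ Z ∈ z, br x Z = 0) ∧
  (∀ x y : n, br x y ∈ z) ∧
  (∀ Z ∈ z, ∀ X ∈ v, ∀ W : n,
      (W ∈ v ∧ ∀ Y ∈ v, ⟪W, Y⟫ = ⟪Z, br X Y⟫) → ‖W‖ = ‖Z‖ * ‖X‖)

/-- for a non-abelian H-type algebra the ordered decomposition is unique,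
given by the center and its orthogonal complement; for a nonzero abelian one there
are exactly the two decompositions `(n, {0})` and `({0}, n)`. -/
theorem htype_ordered_decomposition_unique
    {n : Type*} [NormedAddCommGroup n] [InnerProductSpace ℝ n] [FiniteDimensional ℝ n]
    (br : n →ₗ[ℝ] n →ₗ[ℝ] n)
    (halt : ∀ x : n, br x x = 0)
    (hjac : ∀ x y w : n, br x (br y w) + br y (br w x) + br w (br x y) = 0) :
    ((∃ x y : n, br x y ≠ 0) →
      ∀ z v : Submodule ℝ n, IsHTypeDecomp br z v →
        z = bracketCenter br ∧ v = (bracketCenter br)ᗮ) ∧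
    ((∀ x y : n, br x y = 0) → (∃ x : n, x ≠ 0) →
      ∀ z v : Submodule ℝ n,
        (IsHTypeDecomp br z v ↔ ((z = ⊤ ∧ v = ⊥) ∨ (z = ⊥ ∧ v = ⊤)))) := by
  have hanti : ∀ x y : n, br x y = - br y x := by
    intro x y
    have h := halt (x + y)
    rw [map_add] at h
    simp only [LinearMap.add_apply, map_add, halt x, halt y, zero_add, add_zero] at h
    exact eq_neg_of_add_eq_zero_right h
  constructor
  · rintro ⟨x0, y0, hxy⟩ z v ⟨hv, h2, h3, h4⟩
    have hZ0 : br x0 y0 ∈ z := h3 x0 y0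
    -- central elements of v are zero
    have key : ∀ X ∈ v, (∀ y : n, br X y = 0) → X = 0 := by
      intro X hX hXc
      have h0 := h4 (br x0 y0) hZ0 X hX 0
        ⟨v.zero_mem, fun Y _ => by simp [hXc Y]⟩
      simp only [norm_zero] at h0
      rcases mul_eq_zero.mp h0.symm with h | h
      · exact absurd (norm_eq_zero.mp h) hxy
      · exact norm_eq_zero.mp h
    have hzc : z ≤ bracketCenter br := by
      intro Z hZ y
      rw [hanti]
      rw [h2 y Z hZ, neg_zero]
    have hcz : bracketCenter br ≤ z := by
      intro c hc
      obtain ⟨cz, hcz', cv, hcv, hsum⟩ := Submodule.exists_add_mem_mem_orthogonal (K := z) c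
      have hcv_v : cv ∈ v := hv ▸ hcv
      have hcv_c : ∀ y : n, br cv y = 0 := by
        intro y
        have : br c y = br cz y + br cv y := by rw [hsum, map_add, LinearMap.add_apply]
        have hc' : br c y = 0 := hc y
        have hcz'' : br cz y = 0 := hzc hcz' y
        rw [hc', hcz'', zero_add] at this
        exact this.symm
      have : cv = 0 := key cv hcv_v hcv_c
      rw [hsum, this, add_zero]
      exact hcz'
    have hz : z = bracketCenter br := le_antisymm hzc hcz
    exact ⟨hz, by rw [hv, hz]⟩
  · rintro hab ⟨x1, hx1⟩ z v
    constructor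
    · rintro ⟨hv, -, -, h4⟩
      by_cases hz : z = ⊥
      · right
        exact ⟨hz, by rw [hv, hz, Submodule.bot_orthogonal_eq_top]⟩
      · left
        obtain ⟨Z, hZ, hZne⟩ := Submodule.ne_bot_iff z |>.mp hz
        have hvbot : v = ⊥ := by
          rw [Submodule.eq_bot_iff]
          intro X hX
          have h0 := h4 Z hZ X hX 0
            ⟨v.zero_mem, fun Y _ => by simp [hab X Y]⟩
          simp only [norm_zero] at h0
          rcases mul_eq_zero.mp h0.symm with h | h
          · exact absurd (norm_eq_zero.mp h) hZne
          · exact norm_eq_zero.mp h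
        refine ⟨?_, hvbot⟩
        have : zᗮ = ⊥ := by rw [← hv, hvbot]
        calc z = zᗮᗮ := (Submodule.orthogonal_orthogonal z).symm
          _ = (⊥ : Submodule ℝ n)ᗮ := by rw [this]
          _ = ⊤ := Submodule.bot_orthogonal_eq_top
    · rintro (⟨hz, hv⟩ | ⟨hz, hv⟩) <;> subst hz <;> subst hv
      · refine ⟨Submodule.top_orthogonal_eq_bot.symm, fun x Z _ => hab x Z,
          fun x y => Submodule.mem_top, ?_⟩
        rintro Z _ X hX W ⟨hW, -⟩
        rw [Submodule.mem_bot] at hX hW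
        simp [hX, hW]
      · refine ⟨Submodule.bot_orthogonal_eq_top.symm, fun x Z _ => hab x Z,
          fun x y => by rw [hab x y]; exact Submodule.zero_mem ⊥, ?_⟩
        rintro Z hZ X _ W ⟨-, hW⟩
        rw [Submodule.mem_bot] at hZ
        have : W = 0 := by
          have := hW W Submodule.mem_top
          rw [hZ] at this
          simp only [inner_zero_left] at this
          exact inner_self_eq_zero.mp this
        simp [this, hZ]
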